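/- There exist no nontrivial upcycles for A^n with diamondicity d and a = |A| when gcd(a^{n−d}, n) ≤ 3; equivalently, every nontrivial upcycle has frame period at least 4. -/

import Mathlib

/-- The window of length `n` of the cyclic partial word `u` starting at position `i`
covers the total word `w`. -/
def Covers (a n : ℕ) (u : ℕ → Option (Fin a)) (i : ℕ) (w : Fin n → Fin a) : Prop :=
  ∀ j : Fin n, u (i + (j : ℕ)) = none ∨ u (i + (j : ℕ)) = some (w j)

/-- `u`, viewed as a cyclic partial word of length `N`, is a universal partial cycle
for `(Fin a)^n`. -/
def IsUpcycle (a n N : ℕ) (u : ℕ → Option (Fin a)) : Prop :=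
  (∀ i, u (i + N) = u i) ∧ ∀ w : Fin n → Fin a, ∃! i : Fin N, Covers a n u (i : ℕ) w

lemma frame_period_n {a n d : ℕ} {u : ℕ → Option (Fin a)}
    (hdiam : ∀ i, ((Finset.range n).filter (fun j => u (i + j) = none)).card = d) (i : ℕ) :
    (u (i + n) = none) ↔ (u i = none) := by
  classical
  have hc : ∀ m, ((Finset.range n).filter (fun j => u (m + j) = none)).card
      = ∑ j ∈ Finset.range n, (if u (m + j) = none then 1 else 0) := by
    intro m; rw [Finset.card_filter]
  have h1 : ∑ j ∈ Finset.range (n+1), (if u (i + j) = none then 1 else 0)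
      = d + (if u (i + n) = none then 1 else 0) := by
    rw [Finset.sum_range_succ, ← hc, hdiam]
  have h2 : ∑ j ∈ Finset.range (n+1), (if u (i + j) = none then 1 else 0)
      = (if u i = none then 1 else 0) + d := by
    rw [Finset.sum_range_succ']
    have e : ∀ j ∈ Finset.range n, (if u (i + (j + 1)) = none then (1:ℕ) else 0)
        = (if u ((i + 1) + j) = none then 1 else 0) := by
      intro j _
      rw [show i + (j + 1) = (i + 1) + j by omega]
    rw [Finset.sum_congr rfl e, ← hc, hdiam, Nat.add_zero, Nat.add_comm]
  have h3 := h1.symm.trans h2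
  by_cases hA : u (i + n) = none <;> by_cases hB : u i = none <;>
    simp [hA, hB] at h3 ⊢

lemma period_iter {P : ℕ → Prop} {n : ℕ} (h : ∀ i, P (i + n) ↔ P i) :
    ∀ k i, P (i + k * n) ↔ P i := by
  intro k
  induction k with
  | zero => simp
  | succ k ih =>
    intro i
    have : i + (k+1) * n = (i + k * n) + n := by ring
    rw [this]
    exact (h _).trans (ih i)

lemma periodic_gcd {P : ℕ → Prop} {n N : ℕ} (hn : 0 < n) (hN : 0 < N)
    (h1 : ∀ i, P (i + n) ↔ P i) (h2 : ∀ i, P (i + N) ↔ P i) (i : ℕ) :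
    P (i + Nat.gcd N n) ↔ P i := by
  rcases lt_or_ge (Nat.gcd N n) n with hlt | hge
  · obtain ⟨m, -, hm⟩ := Nat.exists_mul_mod_eq_gcd hlt
    set g := Nat.gcd N n with hg
    have hdiv : N * m = n * (N * m / n) + g := by
      conv_lhs => rw [← Nat.div_add_mod (N * m) n, hm]
    have e : i + g + (N * m / n) * n = i + m * N := by
      have e1 : m * N = N * m := Nat.mul_comm _ _
      have e2 : n * (N * m / n) = (N * m / n) * n := Nat.mul_comm _ _
      omega
    have k1 : P (i + g + (N * m / n) * n) ↔ P (i + g) := period_iter h1 (N * m / n) (i + g)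
    have k2 : P (i + m * N) ↔ P i := period_iter h2 m i
    rw [e] at k1
    exact k1.symm.trans k2
  · have heq : Nat.gcd N n = n := le_antisymm (Nat.le_of_dvd hn (Nat.gcd_dvd_right N n)) hge
    rw [heq]; exact h1 i

lemma u_iter {a N : ℕ} {u : ℕ → Option (Fin a)} (hper : ∀ i, u (i + N) = u i) :
    ∀ (k x : ℕ), u (x + N * k) = u x := by
  intro k
  induction k with
  | zero => simp
  | succ k ih =>
    intro x
    rw [show x + N * (k+1) = (x + N * k) + N by ring, hper, ih]

lemma u_mod {a N : ℕ} {u : ℕ → Option (Fin a)} (hper : ∀ i, u (i + N) = u i)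
    (x : ℕ) : u (x % N) = u x := by
  conv_rhs => rw [← Nat.mod_add_div x N]
  exact (u_iter hper (x / N) (x % N)).symm

lemma covers_mod {a n N : ℕ} {u : ℕ → Option (Fin a)} (hper : ∀ i, u (i + N) = u i)
    {p : ℕ} {w : Fin n → Fin a} (h : Covers a n u p w) : Covers a n u (p % N) w := by
  intro j
  have e : u (p % N + (j:ℕ)) = u (p + (j:ℕ)) := by
    have hpj : p + (j:ℕ) = (p % N + (j:ℕ)) + N * (p / N) := by
      have := Nat.mod_add_div p N
      omega
    rw [hpj, u_iter hper]
  rw [e]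
  exact h j

lemma no_single_letter_residue {a n N G ρ : ℕ} (hn : 0 < n) (hN : 2 ≤ N)
    (hG : 2 ≤ G) (hanz : 0 < a)
    {u : ℕ → Option (Fin a)} (hper : ∀ i, u (i + N) = u i)
    (hcov : ∀ w : Fin n → Fin a, ∃! i : Fin N, Covers a n u (i : ℕ) w)
    (hchar : ∀ x, ¬ (u x = none) ↔ x % G = ρ) : False := by
  classical
  set L : ℕ → Fin a := fun x => (u x).getD ⟨0, hanz⟩ with hLdef
  have hsome : ∀ x, x % G = ρ → u x = some (L x) := by
    intro x hx
    have hx' := (hchar x).mpr hx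
    cases h : u x with
    | none => exact absurd h hx'
    | some v => simp [hLdef, h]
  have hnone : ∀ x, ¬ (x % G = ρ) → u x = none := by
    intro x hx
    by_contra h
    exact hx ((hchar x).mp h)
  set w : Fin n → Fin a := fun j =>
    if (N + (j:ℕ)) % G = ρ then L (N + (j:ℕ))
    else if (N + 1 + (j:ℕ)) % G = ρ then L (N + 1 + (j:ℕ)) else ⟨0, hanz⟩ with hw
  have c0 : Covers a n u N w := by
    intro j
    by_cases h : (N + (j:ℕ)) % G = ρ
    · right; rw [hsome _ h]; simp [hw, h]
    · left; exact hnone _ h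
  have c1 : Covers a n u (N + 1) w := by
    intro j
    by_cases h : (N + 1 + (j:ℕ)) % G = ρ
    · right
      have h0 : ¬ ((N + (j:ℕ)) % G = ρ) := by
        intro h0
        have hmeq : (N + (j:ℕ)) % G = (N + 1 + (j:ℕ)) % G := h0.trans h.symm
        have hd : G ∣ (N + 1 + (j:ℕ)) - (N + (j:ℕ)) :=
          (Nat.modEq_iff_dvd' (by omega)).mp hmeq
        rw [show (N + 1 + (j:ℕ)) - (N + (j:ℕ)) = 1 by omega] at hd
        have := Nat.le_of_dvd Nat.one_pos hd
        omega
      rw [hsome _ h]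
      simp [hw, h0, h]
    · left; exact hnone _ h
  have c0' : Covers a n u 0 w := by
    intro j
    rw [show (0:ℕ) + (j:ℕ) = (j:ℕ) by omega, ← hper (j:ℕ),
      show (j:ℕ) + N = N + (j:ℕ) by omega]
    exact c0 j
  have c1' : Covers a n u 1 w := by
    intro j
    rw [show (1:ℕ) + (j:ℕ) = (j:ℕ) + 1 by omega, ← hper ((j:ℕ)+1),
      show (j:ℕ) + 1 + N = N + 1 + (j:ℕ) by omega]
    exact c1 j
  obtain ⟨i, _, huniq⟩ := hcov w
  have e0 : (⟨0, by omega⟩ : Fin N) = i := huniq ⟨0, by omega⟩ c0'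
  have e1 : (⟨1, by omega⟩ : Fin N) = i := huniq ⟨1, by omega⟩ c1'
  have := congrArg Fin.val (e0.trans e1.symm)
  simp at this

/-- interleave three `q`-tuples into a `3q`-tuple -/
def ilv (a q n : ℕ) (hn : n = 3*q) (A B C : Fin q → Fin a) : Fin n → Fin a := fun j =>
  if (j:ℕ) % 3 = 0 then A ⟨(j:ℕ)/3, by have := j.isLt; omega⟩
  else if (j:ℕ) % 3 = 1 then B ⟨(j:ℕ)/3, by have := j.isLt; omega⟩
  else C ⟨(j:ℕ)/3, by have := j.isLt; omega⟩

lemma ilv0 {a q n : ℕ} (hn : n = 3*q) (A B C : Fin q → Fin a) (j : Fin n) (t : Fin q)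
    (hj : (j:ℕ) = 3*(t:ℕ)) : ilv a q n hn A B C j = A t := by
  unfold ilv
  rw [if_pos (by omega)]
  congr 1
  apply Fin.ext
  show (j:ℕ)/3 = (t:ℕ)
  omega

lemma ilv1 {a q n : ℕ} (hn : n = 3*q) (A B C : Fin q → Fin a) (j : Fin n) (t : Fin q)
    (hj : (j:ℕ) = 3*(t:ℕ) + 1) : ilv a q n hn A B C j = B t := by
  unfold ilv
  rw [if_neg (by omega), if_pos (by omega)]
  congr 1
  apply Fin.ext
  show (j:ℕ)/3 = (t:ℕ)
  omega

lemma ilv2 {a q n : ℕ} (hn : n = 3*q) (A B C : Fin q → Fin a) (j : Fin n) (t : Fin q)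
    (hj : (j:ℕ) = 3*(t:ℕ) + 2) : ilv a q n hn A B C j = C t := by
  unfold ilv
  rw [if_neg (by omega), if_neg (by omega)]
  congr 1
  apply Fin.ext
  show (j:ℕ)/3 = (t:ℕ)
  omega

def Xseq {a : ℕ} (L : ℕ → Fin a) (ρ q m : ℕ) : Fin q → Fin a :=
  fun t => L (3*(m + (t:ℕ)) + ρ + 1)

def Yseq {a : ℕ} (L : ℕ → Fin a) (ρ q m : ℕ) : Fin q → Fin a :=
  fun t => L (3*(m + (t:ℕ)) + ρ + 2)

lemma count_mod3 {ρ : ℕ} (q : ℕ) (hρ : ρ < 3) :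
    ((Finset.range (3*q)).filter (fun j => j % 3 = ρ)).card = q := by
  have himg : (Finset.range (3*q)).filter (fun j => j % 3 = ρ)
      = (Finset.range q).image (fun t => 3*t + ρ) := by
    ext j
    simp only [Finset.mem_filter, Finset.mem_range, Finset.mem_image]
    constructor
    · rintro ⟨h1, h2⟩
      exact ⟨j / 3, by omega, by omega⟩
    · rintro ⟨t, ht, rfl⟩
      omega
  rw [himg, Finset.card_image_of_injective _ (fun x y h => by omega), Finset.card_range]

lemma hard_case {a q M ρ n N : ℕ} (ha : 2 ≤ a) (hq : 1 ≤ q) (hρ : ρ < 3)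
    (hn3 : n = 3 * q) (hN3 : N = 3 * M) (hNval : N = a ^ (2 * q))
    {u : ℕ → Option (Fin a)} (hper : ∀ i, u (i + N) = u i)
    (hcov : ∀ w : Fin n → Fin a, ∃! i : Fin N, Covers a n u (i : ℕ) w)
    (hchar : ∀ x, u x = none ↔ x % 3 = ρ) : False := by
  classical
  have hanz : 0 < a := by omega
  have hK2 : 2 ≤ a ^ q := by
    have : 1 < a ^ q := Nat.one_lt_pow (by omega) (by omega)
    omega
  have hNK : N = a ^ q * a ^ q := by rw [hNval, two_mul, pow_add]
  have hM2 : 2 ≤ M := by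
    have h4 : 2 * 2 ≤ a ^ q * a ^ q := Nat.mul_le_mul hK2 hK2
    omega
  set L : ℕ → Fin a := fun x => (u x).getD ⟨0, hanz⟩ with hLdef
  have hnone : ∀ x, x % 3 = ρ → u x = none := fun x hx => (hchar x).mpr hx
  have hsome : ∀ x, ¬ (x % 3 = ρ) → u x = some (L x) := by
    intro x hx
    cases h : u x with
    | none => exact absurd ((hchar x).mp h) hx
    | some v => simp [hLdef, h]
  -- coverage constructions
  have cov0 : ∀ (m : ℕ) (A : Fin q → Fin a),
      Covers a n u (3*m + ρ) (ilv a q n hn3 A (Xseq L ρ q m) (Yseq L ρ q m)) := by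
    intro m A j
    have hjq : (j:ℕ) < 3*q := by have := j.isLt; omega
    rcases (by omega : (j:ℕ) % 3 = 0 ∨ (j:ℕ) % 3 = 1 ∨ (j:ℕ) % 3 = 2) with h|h|h
    · left; exact hnone _ (by omega)
    · right
      rw [ilv1 hn3 A _ _ j ⟨(j:ℕ)/3, by omega⟩ (by show (j:ℕ) = 3*((j:ℕ)/3) + 1; omega),
        show 3*m + ρ + (j:ℕ) = 3*(m + ((j:ℕ)/3)) + ρ + 1 by omega,
        hsome _ (by omega)]
      rfl
    · right
      rw [ilv2 hn3 A _ _ j ⟨(j:ℕ)/3, by omega⟩ (by show (j:ℕ) = 3*((j:ℕ)/3) + 2; omega),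
        show 3*m + ρ + (j:ℕ) = 3*(m + ((j:ℕ)/3)) + ρ + 2 by omega,
        hsome _ (by omega)]
      rfl
  have cov1 : ∀ (m : ℕ) (C : Fin q → Fin a),
      Covers a n u (3*m + ρ + 1) (ilv a q n hn3 (Xseq L ρ q m) (Yseq L ρ q m) C) := by
    intro m C j
    have hjq : (j:ℕ) < 3*q := by have := j.isLt; omega
    rcases (by omega : (j:ℕ) % 3 = 0 ∨ (j:ℕ) % 3 = 1 ∨ (j:ℕ) % 3 = 2) with h|h|h
    · right
      rw [ilv0 hn3 _ _ C j ⟨(j:ℕ)/3, by omega⟩ (by show (j:ℕ) = 3*((j:ℕ)/3); omega),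
        show 3*m + ρ + 1 + (j:ℕ) = 3*(m + ((j:ℕ)/3)) + ρ + 1 by omega,
        hsome _ (by omega)]
      rfl
    · right
      rw [ilv1 hn3 _ _ C j ⟨(j:ℕ)/3, by omega⟩ (by show (j:ℕ) = 3*((j:ℕ)/3) + 1; omega),
        show 3*m + ρ + 1 + (j:ℕ) = 3*(m + ((j:ℕ)/3)) + ρ + 2 by omega,
        hsome _ (by omega)]
      rfl
    · left; exact hnone _ (by omega)
  -- analysis of an arbitrary covering of an interleaved word
  have ana : ∀ (i' : ℕ) (A B C : Fin q → Fin a), 6 ≤ i' →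
      Covers a n u i' (ilv a q n hn3 A B C) →
      (∃ m, B = Xseq L ρ q m ∧ C = Yseq L ρ q m) ∨
      (∃ m, A = Xseq L ρ q m) ∨ (∃ m, A = Yseq L ρ q m) := by
    intro i' A B C hi6 hcv
    rcases (by omega : i' % 3 = ρ % 3 ∨ i' % 3 = (ρ+1) % 3 ∨ i' % 3 = (ρ+2) % 3) with h|h|h
    · left
      refine ⟨(i' - ρ)/3, ?_, ?_⟩
      · funext t
        have hjlt : 3*(t:ℕ)+1 < n := by have := t.isLt; omega
        have hc := hcv ⟨3*(t:ℕ)+1, hjlt⟩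
        rw [ilv1 hn3 A B C ⟨3*(t:ℕ)+1, hjlt⟩ t rfl,
          show i' + ((⟨3*(t:ℕ)+1, hjlt⟩ : Fin n):ℕ) = 3*((i'-ρ)/3 + (t:ℕ)) + ρ + 1 by
            show i' + (3*(t:ℕ)+1) = 3*((i'-ρ)/3 + (t:ℕ)) + ρ + 1; omega,
          hsome _ (by omega)] at hc
        rcases hc with hc | hc
        · exact absurd hc (by simp)
        · exact (Option.some.inj hc).symm
      · funext t
        have hjlt : 3*(t:ℕ)+2 < n := by have := t.isLt; omega
        have hc := hcv ⟨3*(t:ℕ)+2, hjlt⟩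
        rw [ilv2 hn3 A B C ⟨3*(t:ℕ)+2, hjlt⟩ t rfl,
          show i' + ((⟨3*(t:ℕ)+2, hjlt⟩ : Fin n):ℕ) = 3*((i'-ρ)/3 + (t:ℕ)) + ρ + 2 by
            show i' + (3*(t:ℕ)+2) = 3*((i'-ρ)/3 + (t:ℕ)) + ρ + 2; omega,
          hsome _ (by omega)] at hc
        rcases hc with hc | hc
        · exact absurd hc (by simp)
        · exact (Option.some.inj hc).symm
    · right; left
      refine ⟨(i' - ρ - 1)/3, ?_⟩
      funext t
      have hjlt : 3*(t:ℕ) < n := by have := t.isLt; omega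
      have hc := hcv ⟨3*(t:ℕ), hjlt⟩
      rw [ilv0 hn3 A B C ⟨3*(t:ℕ), hjlt⟩ t rfl,
        show i' + ((⟨3*(t:ℕ), hjlt⟩ : Fin n):ℕ) = 3*((i'-ρ-1)/3 + (t:ℕ)) + ρ + 1 by
          show i' + (3*(t:ℕ)) = 3*((i'-ρ-1)/3 + (t:ℕ)) + ρ + 1; omega,
        hsome _ (by omega)] at hc
      rcases hc with hc | hc
      · exact absurd hc (by simp)
      · exact (Option.some.inj hc).symm
    · right; right
      refine ⟨(i' - ρ - 2)/3, ?_⟩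
      funext t
      have hjlt : 3*(t:ℕ) < n := by have := t.isLt; omega
      have hc := hcv ⟨3*(t:ℕ), hjlt⟩
      rw [ilv0 hn3 A B C ⟨3*(t:ℕ), hjlt⟩ t rfl,
        show i' + ((⟨3*(t:ℕ), hjlt⟩ : Fin n):ℕ) = 3*((i'-ρ-2)/3 + (t:ℕ)) + ρ + 2 by
          show i' + (3*(t:ℕ)) = 3*((i'-ρ-2)/3 + (t:ℕ)) + ρ + 2; omega,
        hsome _ (by omega)] at hc
      rcases hc with hc | hc
      · exact absurd hc (by simp)
      · exact (Option.some.inj hc).symm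
  -- periodicity of the window sequences
  have hLiter : ∀ (x k : ℕ), L (x + N * k) = L x := by
    intro x k
    simp only [hLdef, u_iter hper]
  have hXmod : ∀ m, Xseq L ρ q m = Xseq L ρ q (m % M) := by
    intro m
    funext t
    show L (3*(m + (t:ℕ)) + ρ + 1) = L (3*(m % M + (t:ℕ)) + ρ + 1)
    have e1 : 3*(m + (t:ℕ)) + ρ + 1 = (3*(m % M + (t:ℕ)) + ρ + 1) + N * (m / M) := by
      have e2 : N * (m / M) = 3 * (M * (m / M)) := by rw [hN3]; ring
      have e3 := Nat.mod_add_div m M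
      omega
    rw [e1, hLiter]
  have hYmod : ∀ m, Yseq L ρ q m = Yseq L ρ q (m % M) := by
    intro m
    funext t
    show L (3*(m + (t:ℕ)) + ρ + 2) = L (3*(m % M + (t:ℕ)) + ρ + 2)
    have e1 : 3*(m + (t:ℕ)) + ρ + 2 = (3*(m % M + (t:ℕ)) + ρ + 2) + N * (m / M) := by
      have e2 : N * (m / M) = 3 * (M * (m / M)) := by rw [hN3]; ring
      have e3 := Nat.mod_add_div m M
      omega
    rw [e1, hLiter]
  -- the finsets
  set 𝒳 : Finset (Fin q → Fin a) := (Finset.range M).image (Xseq L ρ q) with hXs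
  set 𝒴 : Finset (Fin q → Fin a) := (Finset.range M).image (Yseq L ρ q) with hYs
  set S : Finset ((Fin q → Fin a) × (Fin q → Fin a)) :=
    (Finset.range M).image (fun m => (Xseq L ρ q m, Yseq L ρ q m)) with hSs
  have hMpos : 0 < M := by omega
  have hXmem : ∀ m, Xseq L ρ q m ∈ 𝒳 := by
    intro m
    rw [hXmod m]
    exact Finset.mem_image_of_mem _ (Finset.mem_range.mpr (Nat.mod_lt _ hMpos))
  have hYmem : ∀ m, Yseq L ρ q m ∈ 𝒴 := by
    intro m
    rw [hYmod m]
    exact Finset.mem_image_of_mem _ (Finset.mem_range.mpr (Nat.mod_lt _ hMpos))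
  have hSmem : ∀ m, (Xseq L ρ q m, Yseq L ρ q m) ∈ S := by
    intro m
    rw [hXmod m, hYmod m]
    exact Finset.mem_image_of_mem _ (Finset.mem_range.mpr (Nat.mod_lt _ hMpos))
  -- (b) disjointness of the X and Y window sets
  have hdisj : ∀ m m' : ℕ, Xseq L ρ q m ≠ Yseq L ρ q m' := by
    intro m m' heq
    have hc0 := cov0 m (Xseq L ρ q m')
    have hc1 := cov1 m' (Yseq L ρ q m)
    rw [← heq] at hc1
    obtain ⟨i, _, huniq⟩ := hcov (ilv a q n hn3 (Xseq L ρ q m') (Xseq L ρ q m) (Yseq L ρ q m))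
    have m0 := covers_mod hper hc0
    have m1 := covers_mod hper hc1
    have e0 := huniq ⟨(3*m+ρ) % N, Nat.mod_lt _ (by omega)⟩ m0
    have e1 := huniq ⟨(3*m'+ρ+1) % N, Nat.mod_lt _ (by omega)⟩ m1
    have hval : (3*m+ρ) % N % 3 = (3*m'+ρ+1) % N % 3 :=
      congrArg (fun z : Fin N => (z:ℕ) % 3) (e0.trans e1.symm)
    rw [Nat.mod_mod_of_dvd _ ⟨M, hN3⟩, Nat.mod_mod_of_dvd _ ⟨M, hN3⟩] at hval
    omega
  -- (a) injectivity
  have hinj : Set.InjOn (fun m => (Xseq L ρ q m, Yseq L ρ q m)) ↑(Finset.range M) := by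
    intro m hm m' hm' heq
    rw [Finset.mem_coe, Finset.mem_range] at hm hm'
    have hXe : Xseq L ρ q m = Xseq L ρ q m' := congrArg Prod.fst heq
    have hYe : Yseq L ρ q m = Yseq L ρ q m' := congrArg Prod.snd heq
    have hc0 := cov0 m (fun _ => (⟨0, hanz⟩ : Fin a))
    have hc0' := cov0 m' (fun _ => (⟨0, hanz⟩ : Fin a))
    rw [← hXe, ← hYe] at hc0'
    obtain ⟨i, _, huniq⟩ :=
      hcov (ilv a q n hn3 (fun _ => (⟨0, hanz⟩ : Fin a)) (Xseq L ρ q m) (Yseq L ρ q m))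
    have e0 := huniq ⟨3*m+ρ, by omega⟩ hc0
    have e1 := huniq ⟨3*m'+ρ, by omega⟩ hc0'
    have hval : 3*m+ρ = 3*m'+ρ := congrArg Fin.val (e0.trans e1.symm)
    omega
  have hScard : S.card = M := by
    rw [hSs, Finset.card_image_of_injOn hinj, Finset.card_range]
  have hKcard : Fintype.card (Fin q → Fin a) = a ^ q := by
    simp [Fintype.card_fun]
  -- (c) totality
  have htot : ∀ A : Fin q → Fin a, A ∈ 𝒳 ∪ 𝒴 := by
    intro A
    by_contra hA
    have hcard : S.card < Fintype.card ((Fin q → Fin a) × (Fin q → Fin a)) := by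
      rw [hScard, Fintype.card_prod, hKcard]
      omega
    obtain ⟨p, hp⟩ : ∃ p : (Fin q → Fin a) × (Fin q → Fin a), p ∉ S := by
      by_contra hcon
      push_neg at hcon
      have hsub : Finset.univ ⊆ S := fun p _ => hcon p
      have := Finset.card_le_card hsub
      rw [Finset.card_univ] at this
      omega
    obtain ⟨B, C⟩ := p
    obtain ⟨i, hi, -⟩ := hcov (ilv a q n hn3 A B C)
    have hc' : Covers a n u ((i:ℕ) + N) (ilv a q n hn3 A B C) := by
      intro j
      rw [show (i:ℕ) + N + (j:ℕ) = ((i:ℕ) + (j:ℕ)) + N by ring, hper]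
      exact hi j
    have h6 : 6 ≤ (i:ℕ) + N := by omega
    rcases ana _ A B C h6 hc' with ⟨m, hB, hC⟩ | ⟨m, hm⟩ | ⟨m, hm⟩
    · exact hp (by rw [hB, hC]; exact hSmem m)
    · exact hA (Finset.mem_union_left _ (by rw [hm]; exact hXmem m))
    · exact hA (Finset.mem_union_right _ (by rw [hm]; exact hYmem m))
  -- assemble the contradiction
  have hdisjXY : Disjoint 𝒳 𝒴 := by
    rw [Finset.disjoint_left]
    intro A hAX hAY
    rw [hXs, Finset.mem_image] at hAX
    rw [hYs, Finset.mem_image] at hAY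
    obtain ⟨m, -, rfl⟩ := hAX
    obtain ⟨m', -, he⟩ := hAY
    exact hdisj m m' he.symm
  have hunion : 𝒳 ∪ 𝒴 = Finset.univ := Finset.eq_univ_iff_forall.mpr htot
  have hcardsum : 𝒳.card + 𝒴.card = a ^ q := by
    rw [← Finset.card_union_of_disjoint hdisjXY, hunion, Finset.card_univ, hKcard]
  have hsubprod : S ⊆ 𝒳 ×ˢ 𝒴 := by
    intro p hp
    rw [hSs, Finset.mem_image] at hp
    obtain ⟨m, hm, rfl⟩ := hp
    exact Finset.mem_product.mpr
      ⟨Finset.mem_image_of_mem _ hm, Finset.mem_image_of_mem _ hm⟩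
  have hle : M ≤ 𝒳.card * 𝒴.card := by
    have := Finset.card_le_card hsubprod
    rwa [hScard, Finset.card_product] at this
  have hKK : a ^ q * a ^ q = 3 * M := by rw [← hNK, hN3]
  -- 4*M ≤ 4*x*y ≤ (x+y)^2 = (a^q)^2 = 3*M with M ≥ 2 : contradiction
  have h4 : 4 * (𝒳.card * 𝒴.card) ≤ (𝒳.card + 𝒴.card) * (𝒳.card + 𝒴.card) := by
    obtain ⟨c, hc | hc⟩ : ∃ c, 𝒴.card = 𝒳.card + c ∨ 𝒳.card = 𝒴.card + c := by
      rcases le_total 𝒳.card 𝒴.card with h | h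
      · exact ⟨𝒴.card - 𝒳.card, Or.inl (by omega)⟩
      · exact ⟨𝒳.card - 𝒴.card, Or.inr (by omega)⟩
    · rw [hc]; nlinarith [sq_nonneg c]
    · rw [hc]; nlinarith [sq_nonneg c]
  rw [hcardsum, hKK] at h4
  omega

/-- There are no nontrivial upcycles for `(Fin a)^n` with diamondicity `d` when
`gcd(a^(n-d), n) ≤ 3`: every nontrivial upcycle satisfies `gcd(a^(n-d), n) > 3`
(equivalently, has frame period at least 4). -/
theorem no_upcycle_of_gcd_le_three (a n d : ℕ) (ha : 2 ≤ a) (hn : 0 < n) (hd : d ≤ n)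
    (u : ℕ → Option (Fin a))
    (hu : IsUpcycle a n (a ^ (n - d)) u)
    (hdiam : ∀ i, ((Finset.range n).filter (fun j => u (i + j) = none)).card = d)
    (hdiamond : ∃ i, u i = none) (hletter : ∃ i, u i ≠ none) :
    3 < Nat.gcd (a ^ (n - d)) n := by
  classical
  set N := a ^ (n - d) with hNdef
  obtain ⟨hper, hcov⟩ := hu
  by_contra hg
  push_neg at hg
  set g := Nat.gcd N n with hgdef
  have hNpos : 0 < N := by positivity
  have hgpos : 0 < g := Nat.gcd_pos_of_pos_right _ hn
  have hgN : g ∣ N := Nat.gcd_dvd_left _ _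
  have hgn : g ∣ n := Nat.gcd_dvd_right _ _
  have hPn : ∀ i, (u (i + n) = none) ↔ (u i = none) := frame_period_n hdiam
  have hPN : ∀ i, (u (i + N) = none) ↔ (u i = none) := fun i => by rw [hper]
  have hPg : ∀ i, (u (i + g) = none) ↔ (u i = none) := by
    rw [hgdef]
    exact periodic_gcd (P := fun i => u i = none) hn hNpos hPn hPN
  have hPmod : ∀ x, (u x = none) ↔ (u (x % g) = none) := by
    intro x
    have h := period_iter (P := fun i => u i = none) hPg (x / g) (x % g)
    rw [Nat.mod_add_div'] at h
    exact h
  obtain ⟨i0, h0⟩ := hdiamond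
  obtain ⟨i1, h1⟩ := hletter
  have hNg : g ≤ N := Nat.le_of_dvd hNpos hgN
  rcases (by omega : g = 1 ∨ g = 2 ∨ g = 3) with hg1 | hg2 | hg3
  · rw [hg1] at hPmod
    apply h1
    rw [hPmod i1, Nat.mod_one, ← Nat.mod_one i0, ← hPmod i0]
    exact h0
  · rw [hg2] at hPmod
    by_cases hP0 : u 0 = none <;> by_cases hP1 : u 1 = none
    · apply h1
      rw [hPmod i1]
      rcases (by omega : i1 % 2 = 0 ∨ i1 % 2 = 1) with h | h <;> rw [h] <;> assumption
    · -- letters at residue 1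
      refine no_single_letter_residue (G := 2) (ρ := 1) hn (by omega) (by omega) (by omega)
        hper hcov ?_
      intro x
      rw [hPmod x]
      rcases (by omega : x % 2 = 0 ∨ x % 2 = 1) with h | h <;> rw [h] <;> simp [hP0, hP1]
    · -- letters at residue 0
      refine no_single_letter_residue (G := 2) (ρ := 0) hn (by omega) (by omega) (by omega)
        hper hcov ?_
      intro x
      rw [hPmod x]
      rcases (by omega : x % 2 = 0 ∨ x % 2 = 1) with h | h <;> rw [h] <;> simp [hP0, hP1]
    · rw [hPmod i0] at h0
      rcases (by omega : i0 % 2 = 0 ∨ i0 % 2 = 1) with h | h <;> rw [h] at h0 <;> contradiction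
  · -- g = 3
    rw [hg3] at hPmod
    have h3N : 3 ∣ N := hg3 ▸ hgN
    have h3n : 3 ∣ n := hg3 ▸ hgn
    obtain ⟨q, hn3⟩ := h3n
    obtain ⟨M, hN3⟩ := h3N
    have hq : 1 ≤ q := by omega
    have happly : ∀ ρ : ℕ, ρ < 3 → (∀ x, u x = none ↔ x % 3 = ρ) → False := by
      intro ρ hρ hchar
      have hdq : d = q := by
        have hd0 := hdiam 0
        have hfe : (Finset.range n).filter (fun j => u (0 + j) = none)
            = (Finset.range n).filter (fun j => j % 3 = ρ) := by
          apply Finset.filter_congr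
          intro j _
          rw [Nat.zero_add]
          exact hchar j
        rw [hfe, hn3, count_mod3 q hρ] at hd0
        omega
      exact hard_case ha hq hρ hn3 hN3 (by rw [hNdef, show n - d = 2*q by omega])
        hper hcov hchar
    by_cases hP0 : u 0 = none <;> by_cases hP1 : u 1 = none <;> by_cases hP2 : u 2 = none
    · apply h1
      rw [hPmod i1]
      rcases (by omega : i1 % 3 = 0 ∨ i1 % 3 = 1 ∨ i1 % 3 = 2) with h|h|h <;>
        rw [h] <;> assumption
    · refine no_single_letter_residue (G := 3) (ρ := 2) hn (by omega) (by omega) (by omega)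
        hper hcov ?_
      intro x
      rw [hPmod x]
      rcases (by omega : x % 3 = 0 ∨ x % 3 = 1 ∨ x % 3 = 2) with h|h|h <;> rw [h] <;>
        simp [hP0, hP1, hP2]
    · refine no_single_letter_residue (G := 3) (ρ := 1) hn (by omega) (by omega) (by omega)
        hper hcov ?_
      intro x
      rw [hPmod x]
      rcases (by omega : x % 3 = 0 ∨ x % 3 = 1 ∨ x % 3 = 2) with h|h|h <;> rw [h] <;>
        simp [hP0, hP1, hP2]
    · apply happly 0 (by omega)
      intro x
      rw [hPmod x]
      rcases (by omega : x % 3 = 0 ∨ x % 3 = 1 ∨ x % 3 = 2) with h|h|h <;> rw [h] <;>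
        simp [hP0, hP1, hP2]
    · refine no_single_letter_residue (G := 3) (ρ := 0) hn (by omega) (by omega) (by omega)
        hper hcov ?_
      intro x
      rw [hPmod x]
      rcases (by omega : x % 3 = 0 ∨ x % 3 = 1 ∨ x % 3 = 2) with h|h|h <;> rw [h] <;>
        simp [hP0, hP1, hP2]
    · apply happly 1 (by omega)
      intro x
      rw [hPmod x]
      rcases (by omega : x % 3 = 0 ∨ x % 3 = 1 ∨ x % 3 = 2) with h|h|h <;> rw [h] <;>
        simp [hP0, hP1, hP2]
    · apply happly 2 (by omega)
      intro x
      rw [hPmod x]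
      rcases (by omega : x % 3 = 0 ∨ x % 3 = 1 ∨ x % 3 = 2) with h|h|h <;> rw [h] <;>
        simp [hP0, hP1, hP2]
    · rw [hPmod i0] at h0
      rcases (by omega : i0 % 3 = 0 ∨ i0 % 3 = 1 ∨ i0 % 3 = 2) with h|h|h <;>
        rw [h] at h0 <;> contradiction
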